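/- Let R be a commutative noetherian ring, a a proper ideal, and M an a-torsion R-module such that Ext^i_R(R/a, M) is finitely generated for all i, R̂ ≅ Hom_R(M, M) (as R-modules, where R̂ is the a-adic completion), and Ext^i_R(M, M) = 0 for all i ≥ 1. Then the homothety map χ : R̂ → Hom_R(M, M), r ↦ (x ↦ rx), is itself an isomorphism; i.e., any abstract isomorphism R̂ ≅ Hom_R(M,M) forces the homothety map to be an isomorphism. -/

import Mathlib

open CategoryTheory

noncomputable section
universe u

/-- `Ext^i_R(M, N)`. -/
abbrev extMod (R : Type u) [CommRing R] (i : ℕ) (M N : Type u) [AddCommGroup M] [Module R M]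
    [AddCommGroup N] [Module R N] : ModuleCat R :=
  ((Ext R (ModuleCat.{u} R) i).obj (Opposite.op (ModuleCat.of R M))).obj (ModuleCat.of R N)

/-- `M` is `a`-torsion: every element is annihilated by a power of `a`. -/
def IsAdicTorsion (R : Type u) [CommRing R] (a : Ideal R) (M : Type u)
    [AddCommGroup M] [Module R M] : Prop :=
  ∀ x : M, ∃ n : ℕ, ∀ r ∈ a ^ n, r • x = 0

section Aux

variable {R : Type u} [CommRing R]

/-- Linear maps send `I • ⊤` into `I • ⊤`. -/
private lemma map_mem_smul_top {A B : Type*} [AddCommGroup A] [Module R A]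
    [AddCommGroup B] [Module R B] (f : A →ₗ[R] B) (I : Ideal R) {x : A}
    (hx : x ∈ I • (⊤ : Submodule R A)) : f x ∈ I • (⊤ : Submodule R B) := by
  refine Submodule.smul_induction_on hx (fun c hc y _ => ?_) (fun y z hy hz => ?_)
  · rw [map_smul]; exact Submodule.smul_mem_smul hc Submodule.mem_top
  · rw [map_add]; exact Submodule.add_mem _ hy hz

private lemma mul_right_mem_smul_top {S : Type*} [Ring S] [Algebra R S] (I : Ideal R)
    (s : S) {x : S} (hx : x ∈ I • (⊤ : Submodule R S)) :
    x * s ∈ I • (⊤ : Submodule R S) := by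
  refine Submodule.smul_induction_on hx (fun c hc y _ => ?_) (fun y z hy hz => ?_)
  · rw [smul_mul_assoc]; exact Submodule.smul_mem_smul hc Submodule.mem_top
  · rw [add_mul]; exact Submodule.add_mem _ hy hz

private lemma mul_left_mem_smul_top {S : Type*} [Ring S] [Algebra R S] (I : Ideal R)
    (s : S) {x : S} (hx : x ∈ I • (⊤ : Submodule R S)) :
    s * x ∈ I • (⊤ : Submodule R S) := by
  refine Submodule.smul_induction_on hx (fun c hc y _ => ?_) (fun y z hy hz => ?_)
  · rw [mul_smul_comm]; exact Submodule.smul_mem_smul hc Submodule.mem_top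
  · rw [mul_add]; exact Submodule.add_mem _ hy hz

variable [IsNoetherianRing R] (a : Ideal R)

/-- Strictness of the adic filtration on the adic completion: if the `n`-th component of
`x` vanishes, then `x ∈ aⁿ • R̂`. -/
private lemma mem_smul_top_of_val_eq_zero {n : ℕ} {x : AdicCompletion a R}
    (hx : x.val n = 0) : x ∈ (a ^ n • ⊤ : Submodule R (AdicCompletion a R)) := by
  classical
  have htop : (a ^ n • ⊤ : Ideal R) = a ^ n := by ext y; simp
  set N : Ideal R := a ^ n with hNdef
  haveI : Module.Finite R N := Module.Finite.iff_fg.mpr (IsNoetherian.noetherian N)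
  have hexact := AdicCompletion.map_exact (I := a) (Submodule.injective_subtype N)
      (LinearMap.exact_subtype_mkQ N) (Submodule.mkQ_surjective N)
  have hker : AdicCompletion.map a N.mkQ x = 0 := by
    ext m
    obtain ⟨xm, hxm⟩ := Submodule.Quotient.mk_surjective _ (x.val m)
    rw [AdicCompletion.map_val_apply, ← hxm, LinearMap.reduceModIdeal_apply,
      AdicCompletion.val_zero_apply, Submodule.Quotient.mk_eq_zero]
    by_cases hmn : m ≤ n
    · have h0 : x.val m = 0 := by
        rw [← AdicCompletion.transitionMap_comp_eval_apply (I := a) (M := R) hmn x, hx, map_zero]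
      have hm : xm ∈ (a ^ m • ⊤ : Submodule R R) := by
        rw [← Submodule.Quotient.mk_eq_zero, hxm, h0]
      exact map_mem_smul_top N.mkQ (a ^ m) hm
    · have hnm : n ≤ m := le_of_not_ge hmn
      have h1 := AdicCompletion.transitionMap_comp_eval_apply (I := a) (M := R) hnm x
      rw [← hxm, hx] at h1
      have hxmN : xm ∈ N := by
        have h2 : xm ∈ (a ^ n • ⊤ : Ideal R) := by
          rw [← Submodule.Quotient.mk_eq_zero]
          exact h1
        rwa [htop] at h2
      have : N.mkQ xm = 0 := by
        rw [Submodule.mkQ_apply, Submodule.Quotient.mk_eq_zero]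
        exact hxmN
      rw [this]
      exact Submodule.zero_mem _
  obtain ⟨z, hz⟩ := (hexact x).mp hker
  obtain ⟨t, ht⟩ := AdicCompletion.ofTensorProduct_surjective_of_finite a N z
  have key : ∀ t : TensorProduct R (AdicCompletion a R) N,
      AdicCompletion.map a N.subtype (AdicCompletion.ofTensorProduct a N t)
        ∈ (a ^ n • ⊤ : Submodule R (AdicCompletion a R)) := by
    intro t
    induction t using TensorProduct.induction_on with
    | zero => rw [map_zero, map_zero]; exact Submodule.zero_mem _
    | tmul r w =>
        rw [AdicCompletion.ofTensorProduct_tmul, map_smul]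
        have hof : AdicCompletion.map a N.subtype (AdicCompletion.of a N w)
            = AdicCompletion.of a R (w : R) := by
          ext m
          rfl
        rw [hof]
        have hw : (w : R) ∈ a ^ n := w.2
        have hof1 : AdicCompletion.of a R (w : R) = (w : R) • (1 : AdicCompletion a R) := by
          ext m
          rw [AdicCompletion.val_smul_apply, AdicCompletion.val_one, AdicCompletion.of_apply,
            Submodule.mkQ_apply,
            show (1 : R ⧸ (a ^ m • ⊤ : Ideal R)) = Submodule.Quotient.mk 1 from rfl,
            ← Submodule.Quotient.mk_smul]
          simp
        rw [hof1, smul_comm]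
        exact Submodule.smul_mem_smul hw Submodule.mem_top
    | add y z hy hz =>
        rw [map_add, map_add]
        exact Submodule.add_mem _ hy hz
  rw [← hz, ← ht]
  exact key t

/-- Density of `R` in its adic completion. -/
private lemma exists_sub_algebraMap_mem (x : AdicCompletion a R) (n : ℕ) :
    ∃ r : R, x - algebraMap R (AdicCompletion a R) r
      ∈ (a ^ n • ⊤ : Submodule R (AdicCompletion a R)) := by
  obtain ⟨r, hr⟩ := Submodule.Quotient.mk_surjective _ (x.val n)
  refine ⟨r, mem_smul_top_of_val_eq_zero a ?_⟩
  have h2 : (algebraMap R (AdicCompletion a R) r).val n = Submodule.Quotient.mk r := rfl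
  rw [AdicCompletion.val_sub_apply, h2, hr, sub_self]

/-- If an element of a module abstractly isomorphic to the adic completion lies in
`aⁿ • ⊤` for every `n`, it is zero. -/
private lemma eq_zero_of_forall_mem_smul_top {E : Type u} [AddCommGroup E] [Module R E]
    (α : AdicCompletion a R ≃ₗ[R] E) {d : E}
    (hd : ∀ n : ℕ, d ∈ (a ^ n • ⊤ : Submodule R E)) : d = 0 := by
  have h0 : α.symm d = 0 := by
    refine IsHausdorff.haus (inferInstance : IsHausdorff a (AdicCompletion a R)) _ (fun n => ?_)
    rw [SModEq.zero]
    exact map_mem_smul_top α.symm.toLinearMap (a ^ n) (hd n)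
  have := congrArg α h0
  rwa [α.apply_symm_apply, map_zero] at this

end Aux

/-- Let `R` be commutative noetherian, `a` a proper ideal, and `M` an `a`-torsion `R`-module
such that `Ext^i_R(R/a, M)` is finitely generated for all `i`, there is an abstract `R`-module
isomorphism `R̂ ≅ Hom_R(M, M)`, and `Ext^i_R(M, M) = 0` for `i ≥ 1`.  Then the homothety map
`χ : R̂ → Hom_R(M, M)` (i.e. any `R`-algebra homomorphism `R̂ → End_R(M)`, of which there is
exactly one since `M` is `a`-torsion) is itself an isomorphism. -/
theorem homothety_bijective_of_abstract_iso
    (R : Type u) [CommRing R] [IsNoetherianRing R] (a : Ideal R) (ha : a ≠ ⊤)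
    (M : Type u) [AddCommGroup M] [Module R M]
    (htor : IsAdicTorsion R a M)
    (hfin : ∀ i : ℕ, Module.Finite R (extMod R i (R ⧸ a) M))
    (hiso : Nonempty (AdicCompletion a R ≃ₗ[R] Module.End R M))
    (hext : ∀ i : ℕ, 1 ≤ i → Subsingleton (extMod R i M M)) :
    ∀ χ : AdicCompletion a R →ₐ[R] Module.End R M, Function.Bijective χ := by
  intro χ
  obtain ⟨α⟩ := hiso
  -- `α` is automatically semilinear with respect to `χ`.
  have key : ∀ c y : AdicCompletion a R, α (c * y) = χ c * α y := by
    intro c y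
    have hzero : α (c * y) - χ c * α y = 0 := by
      apply eq_zero_of_forall_mem_smul_top a α
      intro n
      obtain ⟨r, hr⟩ := exists_sub_algebraMap_mem a c n
      set ε := c - algebraMap R (AdicCompletion a R) r with hε
      have hc : c = algebraMap R (AdicCompletion a R) r + ε := by rw [hε]; ring
      have h1 : α (c * y) = r • α y + α (ε * y) := by
        rw [hc, add_mul, map_add, ← Algebra.smul_def, map_smul]
      have h2 : χ c * α y = r • α y + χ ε * α y := by
        rw [hc, map_add, add_mul, AlgHom.commutes, ← Algebra.smul_def]
      have hm1 : α (ε * y) ∈ (a ^ n • ⊤ : Submodule R (Module.End R M)) := by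
        apply map_mem_smul_top α.toLinearMap
        exact mul_right_mem_smul_top (a ^ n) y hr
      have hm2 : χ ε * α y ∈ (a ^ n • ⊤ : Submodule R (Module.End R M)) :=
        mul_right_mem_smul_top (a ^ n) (α y) (map_mem_smul_top χ.toLinearMap (a ^ n) hr)
      have heq : α (c * y) - χ c * α y = α (ε * y) - χ ε * α y := by
        rw [h1, h2]; abel
      rw [heq]
      exact Submodule.sub_mem _ hm1 hm2
    exact sub_eq_zero.mp hzero
  -- the image of `χ` is central.
  have central : ∀ (c : AdicCompletion a R) (f : Module.End R M), χ c * f = f * χ c := by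
    intro c f
    have hzero : χ c * f - f * χ c = 0 := by
      apply eq_zero_of_forall_mem_smul_top a α
      intro n
      obtain ⟨r, hr⟩ := exists_sub_algebraMap_mem a c n
      set ε := c - algebraMap R (AdicCompletion a R) r with hε
      have hc : c = algebraMap R (AdicCompletion a R) r + ε := by rw [hε]; ring
      have heq : χ c * f - f * χ c = χ ε * f - f * χ ε := by
        rw [hc, map_add, AlgHom.commutes, add_mul, mul_add, Algebra.commutes]
        abel
      rw [heq]
      have hm := map_mem_smul_top χ.toLinearMap (a ^ n) hr
      exact Submodule.sub_mem _ (mul_right_mem_smul_top (a ^ n) f hm)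
        (mul_left_mem_smul_top (a ^ n) f hm)
    exact sub_eq_zero.mp hzero
  set g : Module.End R M := α 1 with hg
  set t : AdicCompletion a R := α.symm 1 with ht
  have hαc : ∀ c : AdicCompletion a R, α c = χ c * g := by
    intro c
    have := key c 1
    rwa [mul_one] at this
  have h1 : χ t * g = 1 := by
    have := hαc t
    rw [ht, α.apply_symm_apply] at this
    exact this.symm
  have h2 : g * χ t = 1 := by rw [← central t g]; exact h1
  set v : AdicCompletion a R := α.symm (g * g) with hv
  have htv : t * v = 1 := by
    apply α.injective
    rw [key t v, hv, α.apply_symm_apply, ← mul_assoc, h1, one_mul, ← hg]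
  have hχv : χ v = g := by
    have h3 : χ t * χ v = 1 := by rw [← map_mul, htv, map_one]
    calc χ v = (g * χ t) * χ v := by rw [h2, one_mul]
      _ = g * (χ t * χ v) := by rw [mul_assoc]
      _ = g := by rw [h3, mul_one]
  constructor
  · intro y₁ y₂ h
    have hker : χ (y₁ - y₂) = 0 := by rw [map_sub, h, sub_self]
    have : α (y₁ - y₂) = 0 := by rw [hαc, hker, zero_mul]
    have := α.injective (by rw [this, map_zero] : α (y₁ - y₂) = α 0)
    exact sub_eq_zero.mp this
  · intro f
    refine ⟨α.symm f * v, ?_⟩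
    rw [map_mul, hχv]
    have := hαc (α.symm f)
    rw [α.apply_symm_apply] at this
    exact this.symm

end
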